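/- Let A be a nonempty compact subset of ℝⁿ consisting of vectors α with Euclidean norm ‖α‖ ≤ 1, and define f : {0,1}ⁿ → ℝ by f(x) = sup_{α ∈ A} Σ_{i=1}^n αᵢ·(xᵢ − 1/2). Then f satisfies condition (2.1) with v = 1, that is, Σ_{i=1}^n (f(x) − f(x^{(i)}))₊² ≤ 1 for all x ∈ {0,1}ⁿ. -/
import Mathlib


open scoped Classical
open Finset

/-- Probability of an event under the uniform distribution on `{0,1}ⁿ`. -/
noncomputable def prb {n : ℕ} (P : (Fin n → Fin 2) → Prop) : ℝ :=
  ((Finset.univ.filter P).card : ℝ) / 2 ^ n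

/-- `x^{(i)}`: flip the `i`-th bit of `x`. -/
noncomputable def flipBit {n : ℕ} (x : Fin n → Fin 2) (i : Fin n) : Fin n → Fin 2 :=
  Function.update x i (x i + 1)

/-- The `α`-quantile `Q_α = inf { z : P{f(X) ≤ z} ≥ α }`. -/
noncomputable def quant {n : ℕ} (f : (Fin n → Fin 2) → ℝ) (α : ℝ) : ℝ :=
  sInf {z : ℝ | α ≤ prb fun x => f x ≤ z}

/-- Expectation of `f(X)` for `X` uniform on `{0,1}ⁿ`. -/
noncomputable def expecb {n : ℕ} (f : (Fin n → Fin 2) → ℝ) : ℝ :=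
  (∑ x, f x) / 2 ^ n

/-- Variance of `f(X)` for `X` uniform on `{0,1}ⁿ`. -/
noncomputable def varb {n : ℕ} (f : (Fin n → Fin 2) → ℝ) : ℝ :=
  expecb fun x => (f x - expecb f) ^ 2

theorem stmt_19 {n : ℕ} (A : Set (Fin n → ℝ)) (hA : A.Nonempty) (hAc : IsCompact A)
    (hnorm : ∀ α ∈ A, Real.sqrt (∑ i, α i ^ 2) ≤ 1)
    (f : (Fin n → Fin 2) → ℝ)
    (hf : ∀ x, f x = sSup ((fun α : Fin n → ℝ =>
      ∑ i, α i * (((x i : ℕ) : ℝ) - 1 / 2)) '' A)) :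
    ∀ x, ∑ i, (max (f x - f (flipBit x i)) 0) ^ 2 ≤ 1 := by
  intro x
  set g : (Fin n → ℝ) → (Fin n → Fin 2) → ℝ :=
    fun α y => ∑ i, α i * (((y i : ℕ) : ℝ) - 1 / 2) with hg
  have hcont : ∀ y, Continuous fun α : Fin n → ℝ => g α y := fun y =>
    continuous_finset_sum _ fun i _ => (continuous_apply i).mul continuous_const
  obtain ⟨α, hαA, hαmax⟩ := hAc.exists_sSup_image_eq hA (hcont x).continuousOn
  have hfx : f x = g α x := by rw [hf]; exact hαmax
  have hflip : ∀ i, g α (flipBit x i) ≤ f (flipBit x i) := by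
    intro i
    rw [hf]
    exact le_csSup ((hAc.image (hcont _)).bddAbove) ⟨α, hαA, rfl⟩
  have key : ∀ i, f x - f (flipBit x i) ≤ |α i| := by
    intro i
    have h1 : f x - f (flipBit x i) ≤ g α x - g α (flipBit x i) := by
      have := hflip i; rw [hfx]; linarith
    have h2 : g α x - g α (flipBit x i)
        = α i * (((x i : ℕ) : ℝ) - ((flipBit x i i : ℕ) : ℝ)) := by
      rw [hg]
      simp only
      rw [← Finset.sum_sub_distrib]
      rw [Finset.sum_eq_single i]
      · ring
      · intro j _ hj
        have : flipBit x i j = x j := by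
          simp [flipBit, Function.update_of_ne hj]
        rw [this]; ring
      · simp
    have h3 : flipBit x i i = x i + 1 := by simp [flipBit]
    have hx : x i = 0 ∨ x i = 1 := by omega
    have h4 : α i * (((x i : ℕ) : ℝ) - ((flipBit x i i : ℕ) : ℝ)) ≤ |α i| := by
      rcases hx with hx | hx <;> rw [h3, hx]
      · norm_num; exact neg_le_abs (α i)
      · rw [show ((1:Fin 2)+1) = 0 from rfl]; norm_num; exact le_abs_self (α i)
    calc f x - f (flipBit x i) ≤ _ := h1
      _ = _ := h2
      _ ≤ |α i| := h4
  have hsum : ∑ i, (max (f x - f (flipBit x i)) 0) ^ 2 ≤ ∑ i, α i ^ 2 := by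
    apply Finset.sum_le_sum
    intro i _
    have hm : max (f x - f (flipBit x i)) 0 ≤ |α i| :=
      max_le (key i) (abs_nonneg _)
    calc (max (f x - f (flipBit x i)) 0) ^ 2 ≤ |α i| ^ 2 := by
          apply pow_le_pow_left₀ (le_max_right _ _) hm
      _ = α i ^ 2 := sq_abs _
  have hA1 : ∑ i, α i ^ 2 ≤ 1 := by
    have h0 : (0:ℝ) ≤ ∑ i, α i ^ 2 := Finset.sum_nonneg fun i _ => sq_nonneg _
    have := hnorm α hαA
    nlinarith [Real.sq_sqrt h0, Real.sqrt_nonneg (∑ i, α i ^ 2)]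
  linarith
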